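/- Let λ ∈ (0,1], λ' ∈ [0,1) with λ > λ', Q = λ − λ', and let φ : M₂(ℂ) → M₂(ℂ) be φ(A) = diag(λa₁₁ + (1−λ)a₂₂, λ'a₁₁ + (1−λ')a₂₂). Define Φ(A) = (Q a₁₁/(1−λ'))e₁₁. Then Φ is q-positive, φ − Φ is completely positive, and φ(I+tφ)^{-1} − Φ(I+tΦ)^{-1} is completely positive for all t ≥ 0 (i.e., φ ≥_q Φ); since Φ has rank 1 while each φ(I+sφ)^{-1} has rank 2, φ is not q-pure. -/

import Mathlib

open Matrix Filter
open scoped Matrix.Norms.L2Operator ComplexOrder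

noncomputable section

def IsCompletelyPositive {n : Type*} [Fintype n] [DecidableEq n]
    (φ : Matrix n n ℂ →ₗ[ℂ] Matrix n n ℂ) : Prop :=
  ∀ (k : ℕ) (A : Matrix (Fin k × n) (Fin k × n) ℂ), A.PosSemidef →
    Matrix.PosSemidef (Matrix.of fun p q : Fin k × n =>
      φ (Matrix.of fun a b => A (p.1, a) (q.1, b)) p.2 q.2)

def Inv2 {n : Type*} [Fintype n] [DecidableEq n]
    (f g : Matrix n n ℂ →ₗ[ℂ] Matrix n n ℂ) : Prop :=
  f ∘ₗ g = LinearMap.id ∧ g ∘ₗ f = LinearMap.id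

def QPositive {n : Type*} [Fintype n] [DecidableEq n]
    (φ : Matrix n n ℂ →ₗ[ℂ] Matrix n n ℂ) : Prop :=
  (∀ c : ℝ, c < 0 → ¬ Module.End.HasEigenvalue φ (c : ℂ)) ∧
  ∀ t : ℝ, 0 ≤ t → ∃ ψ, Inv2 (LinearMap.id + (t : ℂ) • φ) ψ ∧
    IsCompletelyPositive (φ ∘ₗ ψ)

def toC {n : Type*} [Fintype n] [DecidableEq n]
    (φ : Matrix n n ℂ →ₗ[ℂ] Matrix n n ℂ) : Matrix n n ℂ →L[ℂ] Matrix n n ℂ :=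
  LinearMap.toContinuousLinearMap φ

def conjMap {n : Type*} [Fintype n] [DecidableEq n]
    (φ : Matrix n n ℂ →ₗ[ℂ] Matrix n n ℂ) (U : Matrix n n ℂ) :
    Matrix n n ℂ →ₗ[ℂ] Matrix n n ℂ where
  toFun A := Uᴴ * φ (U * A * Uᴴ) * U
  map_add' A B := by simp [Matrix.mul_add, Matrix.add_mul]
  map_smul' c A := by simp [Matrix.mul_smul, Matrix.smul_mul]

/-- Schur (Hadamard) multiplication by a fixed matrix, as a linear map. -/
def schurMap {n : Type*} [Fintype n] [DecidableEq n] (M : Matrix n n ℂ) :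
    Matrix n n ℂ →ₗ[ℂ] Matrix n n ℂ where
  toFun A := Matrix.of fun i j => M i j * A i j
  map_add' A B := by ext i j; simp [Matrix.add_apply]; ring
  map_smul' c A := by ext i j; simp [Matrix.smul_apply]; ring

/-- A state on `Mₙ(ℂ)`. -/
def IsState {n : Type*} [Fintype n] [DecidableEq n]
    (ρ : Matrix n n ℂ →ₗ[ℂ] ℂ) : Prop :=
  ρ 1 = 1 ∧ ∀ A, A.PosSemidef → ∃ r : ℝ, 0 ≤ r ∧ ρ A = (r : ℂ)

def IsProjection {n : Type*} [Fintype n] [DecidableEq n] (P : Matrix n n ℂ) : Prop :=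
  P.IsHermitian ∧ P * P = P

/-- φ ≥_q ψ. -/
def QSub {n : Type*} [Fintype n] [DecidableEq n]
    (φ ψ : Matrix n n ℂ →ₗ[ℂ] Matrix n n ℂ) : Prop :=
  ∀ t : ℝ, 0 ≤ t → ∀ χ₁ χ₂, Inv2 (LinearMap.id + (t : ℂ) • φ) χ₁ →
    Inv2 (LinearMap.id + (t : ℂ) • ψ) χ₂ →
    IsCompletelyPositive (φ ∘ₗ χ₁ - ψ ∘ₗ χ₂)

def QPure {n : Type*} [Fintype n] [DecidableEq n]
    (φ : Matrix n n ℂ →ₗ[ℂ] Matrix n n ℂ) : Prop :=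
  QPositive φ ∧ ∀ ψ, QPositive ψ → QSub φ ψ →
    (ψ = 0 ∨ ∃ s : ℝ, 0 ≤ s ∧ ∀ χ, Inv2 (LinearMap.id + (s : ℂ) • φ) χ → ψ = φ ∘ₗ χ)

/-- The block map `[[A,B],[C,D]] ↦ [[φ(A), σ(B)],[σ*(C), Ψ(D)]]`. -/
def cornerMap {n k : Type*} [Fintype n] [Fintype k] [DecidableEq n] [DecidableEq k]
    (φ : Matrix n n ℂ →ₗ[ℂ] Matrix n n ℂ) (Ψ : Matrix k k ℂ →ₗ[ℂ] Matrix k k ℂ)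
    (σ : Matrix n k ℂ →ₗ[ℂ] Matrix n k ℂ) :
    Matrix (n ⊕ k) (n ⊕ k) ℂ →ₗ[ℂ] Matrix (n ⊕ k) (n ⊕ k) ℂ where
  toFun M := Matrix.fromBlocks (φ M.toBlocks₁₁) (σ M.toBlocks₁₂)
      ((σ (M.toBlocks₂₁)ᴴ)ᴴ) (Ψ M.toBlocks₂₂)
  map_add' M N := by
    have h11 : (M + N).toBlocks₁₁ = M.toBlocks₁₁ + N.toBlocks₁₁ := rfl
    have h12 : (M + N).toBlocks₁₂ = M.toBlocks₁₂ + N.toBlocks₁₂ := rfl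
    have h21 : (M + N).toBlocks₂₁ = M.toBlocks₂₁ + N.toBlocks₂₁ := rfl
    have h22 : (M + N).toBlocks₂₂ = M.toBlocks₂₂ + N.toBlocks₂₂ := rfl
    simp only [h11, h12, h21, h22, map_add, conjTranspose_add, Matrix.fromBlocks_add]
  map_smul' c M := by
    have h11 : (c • M).toBlocks₁₁ = c • M.toBlocks₁₁ := rfl
    have h12 : (c • M).toBlocks₁₂ = c • M.toBlocks₁₂ := rfl
    have h21 : (c • M).toBlocks₂₁ = c • M.toBlocks₂₁ := rfl
    have h22 : (c • M).toBlocks₂₂ = c • M.toBlocks₂₂ := rfl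
    simp only [h11, h12, h21, h22, RingHom.id_apply, _root_.map_smul,
      conjTranspose_smul, star_star, Matrix.fromBlocks_smul]

/-- The diagonal-part map on `M₂(ℂ)`. -/
def diagMap : Matrix (Fin 2) (Fin 2) ℂ →ₗ[ℂ] Matrix (Fin 2) (Fin 2) ℂ where
  toFun A := Matrix.diagonal fun i => A i i
  map_add' A B := by ext i j; by_cases h : i = j <;> simp [Matrix.diagonal, h]
  map_smul' c A := by ext i j; by_cases h : i = j <;> simp [Matrix.diagonal, h]

/-- The map `A ↦ diag(λa₁₁ + (1-λ)a₂₂, λ'a₁₁ + (1-λ')a₂₂)`. -/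
def phiD (l l' : ℝ) : Matrix (Fin 2) (Fin 2) ℂ →ₗ[ℂ] Matrix (Fin 2) (Fin 2) ℂ where
  toFun A := Matrix.diagonal
    ![(l : ℂ) * A 0 0 + (1 - (l : ℂ)) * A 1 1,
      (l' : ℂ) * A 0 0 + (1 - (l' : ℂ)) * A 1 1]
  map_add' A B := by
    ext i j
    fin_cases i <;> fin_cases j <;>
      simp [Matrix.diagonal, Matrix.add_apply] <;> ring
  map_smul' c A := by
    ext i j
    fin_cases i <;> fin_cases j <;>
      simp [Matrix.diagonal, Matrix.smul_apply] <;> ring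

/-- The rank one q-subordinate `Φ(A) = (Q a₁₁/(1-λ')) e₁₁`. -/
def phiSub (l l' : ℝ) : Matrix (Fin 2) (Fin 2) ℂ →ₗ[ℂ] Matrix (Fin 2) (Fin 2) ℂ where
  toFun A := ((((l : ℂ) - (l' : ℂ)) / (1 - (l' : ℂ))) * A 0 0) •
    Matrix.single (0 : Fin 2) (0 : Fin 2) (1 : ℂ)
  map_add' A B := by
    simp [Matrix.add_apply, mul_add, add_smul]
  map_smul' c A := by
    simp [Matrix.smul_apply, smul_smul]; ring_nf


/-! ### Auxiliary machinery -/

/-- General map `A ↦ [[a a₀₀ + b a₁₁, e a₀₁],[e a₁₀, c a₀₀ + d a₁₁]]`. -/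
def gmap (a b c d e : ℂ) : Matrix (Fin 2) (Fin 2) ℂ →ₗ[ℂ] Matrix (Fin 2) (Fin 2) ℂ where
  toFun A := !![a * A 0 0 + b * A 1 1, e * A 0 1; e * A 1 0, c * A 0 0 + d * A 1 1]
  map_add' A B := by
    ext i j; fin_cases i <;> fin_cases j <;> simp [Matrix.add_apply] <;> ring
  map_smul' r A := by
    ext i j; fin_cases i <;> fin_cases j <;> simp [Matrix.smul_apply] <;> ring

lemma gmap_apply (a b c d e : ℂ) (A : Matrix (Fin 2) (Fin 2) ℂ) :
    gmap a b c d e A = !![a * A 0 0 + b * A 1 1, e * A 0 1; e * A 1 0, c * A 0 0 + d * A 1 1] := rfl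

lemma gmap_congr {a b c d e a' b' c' d' e' : ℂ} (ha : a = a') (hb : b = b') (hc : c = c')
    (hd : d = d') (he : e = e') : gmap a b c d e = gmap a' b' c' d' e' := by
  rw [ha, hb, hc, hd, he]

lemma gmap_comp (a b c d e a' b' c' d' e' : ℂ) :
    gmap a b c d e ∘ₗ gmap a' b' c' d' e' =
      gmap (a*a' + b*c') (a*b' + b*d') (c*a' + d*c') (c*b' + d*d') (e*e') := by
  apply LinearMap.ext; intro A
  ext i j; fin_cases i <;> fin_cases j <;> simp [gmap_apply] <;> ring

lemma gmap_id : (LinearMap.id : Matrix (Fin 2) (Fin 2) ℂ →ₗ[ℂ] _) = gmap 1 0 0 1 1 := by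
  apply LinearMap.ext; intro A
  ext i j; fin_cases i <;> fin_cases j <;> simp [gmap_apply]

lemma gmap_sub (a b c d e a' b' c' d' e' : ℂ) :
    gmap a b c d e - gmap a' b' c' d' e' = gmap (a-a') (b-b') (c-c') (d-d') (e-e') := by
  apply LinearMap.ext; intro A
  ext i j; fin_cases i <;> fin_cases j <;> simp [gmap_apply, Matrix.sub_apply] <;> ring

lemma id_add_smul_gmap (t a b c d e : ℂ) :
    (LinearMap.id + t • gmap a b c d e) = gmap (1 + t*a) (t*b) (t*c) (1 + t*d) (1 + t*e) := by
  apply LinearMap.ext; intro A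
  ext i j; fin_cases i <;>
    fin_cases j <;>
    simp [gmap_apply, Matrix.add_apply, Matrix.smul_apply] <;> ring

lemma inv2_gmap {a b c d a' b' c' d' : ℂ}
    (h1 : a*a'+b*c' = 1) (h2 : a*b'+b*d' = 0) (h3 : c*a'+d*c' = 0) (h4 : c*b'+d*d' = 1)
    (h1' : a'*a+b'*c = 1) (h2' : a'*b+b'*d = 0) (h3' : c'*a+d'*c = 0) (h4' : c'*b+d'*d = 1) :
    Inv2 (gmap a b c d 1) (gmap a' b' c' d' 1) := by
  constructor
  · rw [gmap_comp, gmap_id, h1, h2, h3, h4, one_mul]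
  · rw [gmap_comp, gmap_id, h1', h2', h3', h4', one_mul]

lemma inv2_unique {n : Type*} [Fintype n] [DecidableEq n]
    {f g g' : Matrix n n ℂ →ₗ[ℂ] Matrix n n ℂ} (h : Inv2 f g) (h' : Inv2 f g') : g = g' := by
  calc g = g ∘ₗ (f ∘ₗ g') := by rw [h'.1, LinearMap.comp_id]
    _ = (g ∘ₗ f) ∘ₗ g' := by rw [LinearMap.comp_assoc]
    _ = g' := by rw [h.2, LinearMap.id_comp]

lemma gmap_cp (a b c d : ℝ) (ha : 0 ≤ a) (hb : 0 ≤ b) (hc : 0 ≤ c) (hd : 0 ≤ d) :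
    IsCompletelyPositive (gmap (a:ℂ) (b:ℂ) (c:ℂ) (d:ℂ) 0) := by
  intro k A hA
  have hst : ∀ x y, star (A x y) = A y x := by
    intro x y; rw [← Matrix.conjTranspose_apply, hA.1]
  rw [Matrix.posSemidef_iff_dotProduct_mulVec]
  constructor
  · ext ⟨p, i⟩ ⟨q, j⟩
    fin_cases i <;> fin_cases j <;>
      simp [Matrix.conjTranspose_apply, gmap_apply, hst, Complex.conj_ofReal] <;> ring
  · intro x
    have quad : ∀ i j : Fin 2, (0:ℂ) ≤
        ∑ p : Fin k, ∑ q : Fin k, star (x (p, i)) * A (p, j) (q, j) * x (q, i) := by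
      intro i j
      have h := (Matrix.posSemidef_iff_dotProduct_mulVec.mp hA).2 (fun pm => if pm.2 = j then x (pm.1, i) else 0)
      fin_cases j <;>
        simpa [dotProduct, Matrix.mulVec, Fintype.sum_prod_type, Fin.sum_univ_two,
          Finset.mul_sum, mul_assoc] using h
    have key : star x ⬝ᵥ ((Matrix.of fun p q : Fin k × Fin 2 =>
        gmap (a:ℂ) (b:ℂ) (c:ℂ) (d:ℂ) 0 (Matrix.of fun s t => A (p.1, s) (q.1, t)) p.2 q.2) *ᵥ x)
        = (a:ℂ) * (∑ p : Fin k, ∑ q : Fin k, star (x (p, 0)) * A (p, 0) (q, 0) * x (q, 0))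
        + (b:ℂ) * (∑ p : Fin k, ∑ q : Fin k, star (x (p, 0)) * A (p, 1) (q, 1) * x (q, 0))
        + (c:ℂ) * (∑ p : Fin k, ∑ q : Fin k, star (x (p, 1)) * A (p, 0) (q, 0) * x (q, 1))
        + (d:ℂ) * (∑ p : Fin k, ∑ q : Fin k, star (x (p, 1)) * A (p, 1) (q, 1) * x (q, 1)) := by
      simp only [dotProduct, Matrix.mulVec, Fintype.sum_prod_type, Fin.sum_univ_two,
        Matrix.of_apply, gmap_apply, Finset.mul_sum]
      simp only [← Finset.sum_add_distrib]
      refine Finset.sum_congr rfl fun p _ => ?_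
      refine Finset.sum_congr rfl fun q _ => ?_
      simp only [Matrix.cons_val', Matrix.cons_val_zero, Matrix.cons_val_one, Matrix.head_cons,
        Matrix.empty_val', Matrix.cons_val_fin_one, Pi.star_apply, Matrix.vecHead, Matrix.vecTail]
      ring
    rw [key]
    have h0 : ∀ (r : ℝ), 0 ≤ r → (0:ℂ) ≤ (r:ℂ) := fun r hr => by exact_mod_cast hr
    exact add_nonneg (add_nonneg (add_nonneg
      (mul_nonneg (h0 a ha) (quad 0 0)) (mul_nonneg (h0 b hb) (quad 0 1)))
      (mul_nonneg (h0 c hc) (quad 1 0))) (mul_nonneg (h0 d hd) (quad 1 1))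

lemma phiD_eq (l l' : ℝ) : phiD l l' = gmap (l:ℂ) (1-(l:ℂ)) (l':ℂ) (1-(l':ℂ)) 0 := by
  apply LinearMap.ext; intro A
  ext i j; fin_cases i <;> fin_cases j <;> simp [phiD, gmap_apply, Matrix.diagonal]

lemma phiSub_eq (l l' : ℝ) (h : (1:ℝ) - l' ≠ 0) :
    phiSub l l' = gmap ((((l - l')/(1 - l') : ℝ)):ℂ) 0 0 0 0 := by
  apply LinearMap.ext; intro A
  ext i j; fin_cases i <;> fin_cases j <;>
    simp [phiSub, gmap_apply, Matrix.single_apply_same, Matrix.smul_apply,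
      Matrix.single] <;> push_cast <;> ring

lemma diag_eq_smul (d0 d1 : ℂ) : Matrix.diagonal ![d0, d1] =
    d0 • Matrix.single (0 : Fin 2) (0 : Fin 2) (1:ℂ)
    + d1 • Matrix.single (1 : Fin 2) (1 : Fin 2) (1:ℂ) := by
  ext i j; fin_cases i <;> fin_cases j <;>
    simp [Matrix.diagonal, Matrix.single, Matrix.add_apply, Matrix.smul_apply]

set_option maxHeartbeats 2000000 in
/-- `phiD l l'` q-dominates the rank one map `phiSub l l'`, hence
is not q-pure. -/
theorem stmt_14 (l l' : ℝ) (hl : l ∈ Set.Ioc (0 : ℝ) 1)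
    (hl' : l' ∈ Set.Ico (0 : ℝ) 1) (hll : l' < l) :
    QPositive (phiSub l l') ∧
    IsCompletelyPositive (phiD l l' - phiSub l l') ∧
    QSub (phiD l l') (phiSub l l') ∧
    Module.finrank ℂ (LinearMap.range (phiSub l l')) = 1 ∧
    (∀ s : ℝ, 0 ≤ s → ∀ χ, Inv2 (LinearMap.id + (s : ℂ) • phiD l l') χ →
      Module.finrank ℂ (LinearMap.range (phiD l l' ∘ₗ χ)) = 2) ∧
    ¬ QPure (phiD l l') := by
  obtain ⟨hl0, hl1⟩ := hl
  obtain ⟨hl'0, hl'1⟩ := hl'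
  have h1l' : (0:ℝ) < 1 - l' := by linarith
  have h1l'ne : (1:ℝ) - l' ≠ 0 := ne_of_gt h1l'
  have hQ : (0:ℝ) < l - l' := by linarith
  set K : ℝ := (l - l')/(1 - l') with hKdef
  have hK : 0 < K := div_pos hQ h1l'
  have hsub := phiSub_eq l l' h1l'ne
  -- inverse data for phiSub
  have subInv : ∀ t : ℝ, 0 ≤ t →
      Inv2 (LinearMap.id + (t:ℂ) • phiSub l l') (gmap (((1/(1+t*K):ℝ)):ℂ) 0 0 1 1) := by
    intro t ht
    have hkt : (0:ℝ) < 1 + t*K := by nlinarith [mul_nonneg ht hK.le]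
    have hktne : (1:ℝ) + t*K ≠ 0 := ne_of_gt hkt
    rw [hsub, id_add_smul_gmap]
    have he : (1:ℂ) + (t:ℂ) * 0 = 1 := by ring
    rw [gmap_congr rfl rfl rfl rfl he]
    refine inv2_gmap ?_ ?_ ?_ ?_ ?_ ?_ ?_ ?_ <;>
      · norm_cast
        try simp only [hKdef]
        field_simp
        try ring
  have subComp : ∀ t : ℝ, 0 ≤ t →
      phiSub l l' ∘ₗ gmap (((1/(1+t*K):ℝ)):ℂ) 0 0 1 1
        = gmap (((K/(1+t*K):ℝ)):ℂ) 0 0 0 0 := by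
    intro t ht
    have hkt : (0:ℝ) < 1 + t*K := by nlinarith [mul_nonneg ht hK.le]
    have hktne : (1:ℝ) + t*K ≠ 0 := ne_of_gt hkt
    rw [hsub, gmap_comp]
    refine gmap_congr ?_ (by ring) (by ring) (by ring) (by ring)
    norm_cast
    simp only [hKdef]
    field_simp
    simp
  -- inverse data for phiD
  have DInv : ∀ t : ℝ, 0 ≤ t →
      Inv2 (LinearMap.id + (t:ℂ) • phiD l l')
        (gmap (((1+t*(1-l'))/((1+t)*(1+t*(l-l'))) : ℝ) : ℂ)
          (((-(t*(1-l))/((1+t)*(1+t*(l-l'))) : ℝ)) : ℂ)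
          (((-(t*l')/((1+t)*(1+t*(l-l'))) : ℝ)) : ℂ)
          (((1+t*l)/((1+t)*(1+t*(l-l'))) : ℝ) : ℂ) 1) := by
    intro t ht
    have hD : (0:ℝ) < (1+t)*(1+t*(l-l')) := by
      have h1 : (0:ℝ) < 1 + t := by linarith
      have h2 : (0:ℝ) < 1 + t*(l-l') := by nlinarith [mul_nonneg ht hQ.le]
      exact mul_pos h1 h2
    have hDne : ((1:ℝ)+t)*(1+t*(l-l')) ≠ 0 := ne_of_gt hD
    rw [phiD_eq, id_add_smul_gmap]
    have he : (1:ℂ) + (t:ℂ) * 0 = 1 := by ring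
    rw [gmap_congr rfl rfl rfl rfl he]
    refine inv2_gmap ?_ ?_ ?_ ?_ ?_ ?_ ?_ ?_ <;>
      · norm_cast
        field_simp
        ring
  have DComp : ∀ t : ℝ, 0 ≤ t →
      phiD l l' ∘ₗ gmap (((1+t*(1-l'))/((1+t)*(1+t*(l-l'))) : ℝ) : ℂ)
          (((-(t*(1-l))/((1+t)*(1+t*(l-l'))) : ℝ)) : ℂ)
          (((-(t*l')/((1+t)*(1+t*(l-l'))) : ℝ)) : ℂ)
          (((1+t*l)/((1+t)*(1+t*(l-l'))) : ℝ) : ℂ) 1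
        = gmap (((l + t*(l-l'))/((1+t)*(1+t*(l-l'))) : ℝ) : ℂ)
            (((1-l)/((1+t)*(1+t*(l-l'))) : ℝ) : ℂ)
            ((l'/((1+t)*(1+t*(l-l'))) : ℝ) : ℂ)
            (((1-l'+t*(l-l'))/((1+t)*(1+t*(l-l'))) : ℝ) : ℂ) 0 := by
    intro t ht
    have hD : (0:ℝ) < (1+t)*(1+t*(l-l')) := by
      have h1 : (0:ℝ) < 1 + t := by linarith
      have h2 : (0:ℝ) < 1 + t*(l-l') := by nlinarith [mul_nonneg ht hQ.le]
      exact mul_pos h1 h2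
    have hDne : ((1:ℝ)+t)*(1+t*(l-l')) ≠ 0 := ne_of_gt hD
    rw [phiD_eq, gmap_comp]
    refine gmap_congr ?_ ?_ ?_ ?_ (by ring) <;>
      · norm_cast
        field_simp
        ring
  have P1 : QPositive (phiSub l l') := by
    constructor
    · intro c hc hE
      obtain ⟨v, hv⟩ := hE.exists_hasEigenvector
      have hveq : phiSub l l' v = (c:ℂ) • v := hv.apply_eq_smul
      have hcne : (c:ℂ) ≠ 0 := by
        simp only [ne_eq, Complex.ofReal_eq_zero]; linarith
      rw [hsub] at hveq
      have h00 := congr_fun (congr_fun hveq 0) 0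
      have h01 := congr_fun (congr_fun hveq 0) 1
      have h10 := congr_fun (congr_fun hveq 1) 0
      have h11 := congr_fun (congr_fun hveq 1) 1
      simp [gmap_apply, Matrix.smul_apply] at h00 h01 h10 h11
      have hv00 : v 0 0 = 0 := by
        rcases h00 with h | h
        · exfalso
          have heq : ((l - l')/(1 - l') : ℝ) = c := by exact_mod_cast h
          rw [← hKdef] at heq
          linarith
        · exact h
      have hv01 : v 0 1 = 0 := by
        rcases h01 with h | h
        · exact absurd h (by intro h0; rw [h0] at hc; exact lt_irrefl 0 hc)
        · exact h
      have hv10 : v 1 0 = 0 := by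
        rcases h10 with h | h
        · exact absurd h (by intro h0; rw [h0] at hc; exact lt_irrefl 0 hc)
        · exact h
      have hv11 : v 1 1 = 0 := by
        rcases h11 with h | h
        · exact absurd h (by intro h0; rw [h0] at hc; exact lt_irrefl 0 hc)
        · exact h
      apply hv.2
      ext i j
      fin_cases i <;> fin_cases j <;>
        simp [hv00, hv01, hv10, hv11]
    · intro t ht
      refine ⟨_, subInv t ht, ?_⟩
      rw [subComp t ht]
      have hkt : (0:ℝ) < 1 + t*K := by nlinarith [mul_nonneg ht hK.le]
      have hcp := gmap_cp (K/(1+t*K)) 0 0 0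
        (le_of_lt (div_pos hK hkt)) le_rfl le_rfl le_rfl
      simpa using hcp
  have P2 : IsCompletelyPositive (phiD l l' - phiSub l l') := by
    rw [phiD_eq, hsub, gmap_sub]
    have hcoef : (l:ℂ) - (((l - l')/(1 - l') : ℝ):ℂ) = (((l'*(1-l)/(1-l') : ℝ)):ℂ) := by
      have : l - (l - l')/(1 - l') = l'*(1-l)/(1-l') := by
        field_simp
        ring
      push_cast [← this]
      ring
    rw [gmap_congr hcoef (by push_cast; ring : (1:ℂ)-(l:ℂ) - 0 = (((1-l:ℝ)):ℂ))
      (by push_cast; ring : ((l':ℝ):ℂ) - 0 = ((l':ℝ):ℂ))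
      (by push_cast; ring : (1:ℂ)-((l':ℝ):ℂ) - 0 = (((1-l':ℝ)):ℂ)) (by ring : (0:ℂ) - 0 = 0)]
    exact gmap_cp _ _ _ _
      (div_nonneg (mul_nonneg hl'0 (by linarith)) (le_of_lt h1l'))
      (by linarith) hl'0 (by linarith)
  have P3 : QSub (phiD l l') (phiSub l l') := by
    intro t ht χ₁ χ₂ h₁ h₂
    rw [inv2_unique h₁ (DInv t ht), inv2_unique h₂ (subInv t ht), DComp t ht, subComp t ht,
      gmap_sub]
    have hD : (0:ℝ) < (1+t)*(1+t*(l-l')) := by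
      have h1 : (0:ℝ) < 1 + t := by linarith
      have h2 : (0:ℝ) < 1 + t*(l-l') := by nlinarith [mul_nonneg ht hQ.le]
      exact mul_pos h1 h2
    have hE : (0:ℝ) < 1 - l' + t*(l-l') := by nlinarith [mul_nonneg ht hQ.le]
    have hkt : (0:ℝ) < 1 + t*K := by nlinarith [mul_nonneg ht hK.le]
    have hKalt : K/(1+t*K) = (l-l')/(1 - l' + t*(l-l')) := by
      rw [hKdef]
      rw [div_eq_div_iff (by positivity) hE.ne']
      field_simp
      try ring
    have hgap : (l + t*(l-l'))/((1+t)*(1+t*(l-l'))) - K/(1+t*K)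
        = l'*(1-l)/(((1+t)*(1+t*(l-l')))*(1 - l' + t*(l-l'))) := by
      rw [hKalt, div_sub_div _ _ hD.ne' hE.ne',
        div_eq_div_iff (mul_pos hD hE).ne' (mul_pos hD hE).ne']
      ring
    have hc00 : (((l + t*(l-l'))/((1+t)*(1+t*(l-l'))) : ℝ) : ℂ) - (((K/(1+t*K):ℝ)):ℂ)
        = (((l'*(1-l)/(((1+t)*(1+t*(l-l')))*(1 - l' + t*(l-l'))) : ℝ)):ℂ) := by
      rw [← hgap]; push_cast; ring
    rw [gmap_congr hc00 (sub_zero _) (sub_zero _) (sub_zero _) (sub_zero _)]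
    exact gmap_cp _ _ _ _
      (div_nonneg (mul_nonneg hl'0 (by linarith)) (le_of_lt (mul_pos hD hE)))
      (div_nonneg (by linarith) (le_of_lt hD))
      (div_nonneg hl'0 (le_of_lt hD))
      (div_nonneg (by nlinarith) (le_of_lt hD))
  have P4 : Module.finrank ℂ (LinearMap.range (phiSub l l')) = 1 := by
    have hr : LinearMap.range (phiSub l l') =
        Submodule.span ℂ {Matrix.single (0:Fin 2) (0:Fin 2) (1:ℂ)} := by
      apply le_antisymm
      · rintro _ ⟨A, rfl⟩
        exact Submodule.mem_span_singleton.mpr ⟨_, rfl⟩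
      · rw [Submodule.span_le, Set.singleton_subset_iff]
        have hglne : ((l:ℂ) - (l':ℂ)) ≠ 0 := by
          have h : ((l - l' : ℝ) : ℂ) ≠ 0 := Complex.ofReal_ne_zero.mpr (ne_of_gt hQ)
          push_cast at h; exact h
        have h1l'c : ((1:ℂ) - (l':ℂ)) ≠ 0 := by
          have h : ((1 - l' : ℝ) : ℂ) ≠ 0 := Complex.ofReal_ne_zero.mpr h1l'ne
          push_cast at h; exact h
        refine ⟨((1-(l':ℂ))/((l:ℂ)-(l':ℂ))) • Matrix.single 0 0 1, ?_⟩
        ext i j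
        fin_cases i <;> fin_cases j <;>
          simp [phiSub, Matrix.single, Matrix.smul_apply]
        field_simp
    rw [hr]
    refine finrank_span_singleton ?_
    intro h
    have := congr_fun (congr_fun h 0) 0
    simp [Matrix.single] at this
  have P5 : ∀ s : ℝ, 0 ≤ s → ∀ χ, Inv2 (LinearMap.id + (s : ℂ) • phiD l l') χ →
      Module.finrank ℂ (LinearMap.range (phiD l l' ∘ₗ χ)) = 2 := by
    intro s hs χ hχ
    have hsur : Function.Surjective χ := fun y =>
      ⟨((LinearMap.id + (s:ℂ) • phiD l l' :
          Matrix (Fin 2) (Fin 2) ℂ →ₗ[ℂ] Matrix (Fin 2) (Fin 2) ℂ)) y,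
        LinearMap.congr_fun hχ.2 y⟩
    have hrc : LinearMap.range (phiD l l' ∘ₗ χ) = LinearMap.range (phiD l l') := by
      rw [LinearMap.range_comp, LinearMap.range_eq_top.mpr hsur, Submodule.map_top]
    have hrphi : LinearMap.range (phiD l l') =
        Submodule.span ℂ {Matrix.single (0:Fin 2) (0:Fin 2) (1:ℂ),
          Matrix.single (1:Fin 2) (1:Fin 2) (1:ℂ)} := by
      apply le_antisymm
      · rintro _ ⟨A, rfl⟩
        have h : phiD l l' A = ((l:ℂ) * A 0 0 + (1 - (l:ℂ)) * A 1 1) •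
            Matrix.single (0:Fin 2) (0:Fin 2) (1:ℂ)
            + ((l':ℂ) * A 0 0 + (1 - (l':ℂ)) * A 1 1) •
            Matrix.single (1:Fin 2) (1:Fin 2) (1:ℂ) := by
          rw [show phiD l l' A = Matrix.diagonal
            ![(l : ℂ) * A 0 0 + (1 - (l : ℂ)) * A 1 1,
              (l' : ℂ) * A 0 0 + (1 - (l' : ℂ)) * A 1 1] from rfl, diag_eq_smul]
        rw [h]
        exact Submodule.add_mem _
          (Submodule.smul_mem _ _ (Submodule.subset_span (Set.mem_insert _ _)))
          (Submodule.smul_mem _ _ (Submodule.subset_span (Set.mem_insert_of_mem _ rfl)))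
      · rw [Submodule.span_le, Set.insert_subset_iff, Set.singleton_subset_iff]
        have hglc : ((l:ℂ) - (l':ℂ)) ≠ 0 := by
          have hg : ((l - l' : ℝ) : ℂ) ≠ 0 := Complex.ofReal_ne_zero.mpr hQ.ne'
          push_cast at hg; exact hg
        constructor
        · refine ⟨Matrix.diagonal ![(((1-l')/(l-l') : ℝ):ℂ), ((-(l'/(l-l')) : ℝ):ℂ)], ?_⟩
          ext i j
          fin_cases i <;> fin_cases j <;>
            simp [phiD, Matrix.diagonal, Matrix.single] <;>
            · push_cast
              field_simp [hglc]
              try ring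
        · refine ⟨Matrix.diagonal ![((-((1-l)/(l-l')) : ℝ):ℂ), ((l/(l-l') : ℝ):ℂ)], ?_⟩
          ext i j
          fin_cases i <;> fin_cases j <;>
            simp [phiD, Matrix.diagonal, Matrix.single] <;>
            · push_cast
              field_simp [hglc]
              try ring
    rw [hrc, hrphi]
    have hli : LinearIndependent ℂ ![Matrix.single (0:Fin 2) (0:Fin 2) (1:ℂ),
        Matrix.single (1:Fin 2) (1:Fin 2) (1:ℂ)] := by
      rw [linearIndependent_fin2]
      constructor
      · intro h
        have h' : Matrix.single (1:Fin 2) (1:Fin 2) (1:ℂ) = 0 := by simpa using h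
        have := congr_fun (congr_fun h' 1) 1
        simp [Matrix.single] at this
      · intro a h
        have h' : a • Matrix.single (1:Fin 2) (1:Fin 2) (1:ℂ)
            = Matrix.single (0:Fin 2) (0:Fin 2) (1:ℂ) := by simpa using h
        have := congr_fun (congr_fun h' 0) 0
        simp [Matrix.single, Matrix.smul_apply] at this
    have hcard := finrank_span_eq_card hli
    rw [show Set.range ![Matrix.single (0:Fin 2) (0:Fin 2) (1:ℂ),
        Matrix.single (1:Fin 2) (1:Fin 2) (1:ℂ)]
      = {Matrix.single (0:Fin 2) (0:Fin 2) (1:ℂ),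
        Matrix.single (1:Fin 2) (1:Fin 2) (1:ℂ)} by
        simp [Matrix.range_cons, Matrix.range_empty, Set.pair_comm]] at hcard
    simpa using hcard
  refine ⟨P1, P2, P3, P4, P5, ?_⟩
  intro hpure
  rcases hpure.2 (phiSub l l') P1 P3 with h0 | ⟨s, hs, hcond⟩
  · rw [h0, LinearMap.range_zero] at P4
    rw [finrank_bot ℂ (Matrix (Fin 2) (Fin 2) ℂ)] at P4
    exact absurd P4 (by norm_num)
  · have hx := hcond _ (DInv s hs)
    have h2 := P5 s hs _ (DInv s hs)
    rw [← hx] at h2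
    rw [P4] at h2
    exact absurd h2 (by norm_num)
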